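/- Let W : [0, 2π] → ℝ be continuous with W(0) = W(2π) = 0, and for φ ∈ [0, 2π) define the shift W_φ(θ) = W(φ + θ) - W(φ) for θ ∈ [0, 2π - φ] and W_φ(θ) = W(φ + θ - 2π) - W(φ) for θ ∈ [2π - φ, 2π]. If moreover the integrals I_φ = ∫₀^{2π} W_φ(θ) sin θ/(1 - cos θ) dθ all exist absolutely and W satisfies the modulus bound |W(t+δ) - W(t)| ≤ C√(δ log(1/δ)) + Cδ (interpreted cyclically), then φ ↦ I_φ is continuous on [0, 2π). -/

import Mathlib

open Real MeasureTheory

private lemma aux_tan (x : ℝ) (h0 : 0 ≤ x) (hx : x ≤ π/2) :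
    x * Real.cos x ≤ Real.sin x := by
  rcases eq_or_lt_of_le h0 with h | h
  · simp [← h]
  rcases eq_or_lt_of_le hx with h' | h'
  · rw [h']; simp
  · have ht := Real.lt_tan h h'
    rw [Real.tan_eq_sin_div_cos] at ht
    have hc : 0 < Real.cos x := Real.cos_pos_of_mem_Ioo ⟨by linarith [Real.pi_pos], h'⟩
    rw [lt_div_iff₀ hc] at ht
    linarith

private lemma aux_cos (x : ℝ) : Real.cos x = 1 - 2 * Real.sin (x / 2) ^ 2 := by
  have h := Real.cos_two_mul (x/2)
  have h3 := Real.sin_sq_add_cos_sq (x/2)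
  have h4 : Real.cos x = Real.cos (2*(x/2)) := by congr 1; ring
  rw [h4, h]; linarith

private lemma aux_P (x : ℝ) (h0 : 0 ≤ x) (hx : x ≤ π) :
    x * Real.sin x ≤ 2 * (1 - Real.cos x) := by
  have hπ := Real.pi_pos
  have hs : 0 ≤ Real.sin (x/2) :=
    Real.sin_nonneg_of_nonneg_of_le_pi (by linarith) (by linarith)
  have h1 : Real.sin x = 2 * Real.sin (x/2) * Real.cos (x/2) := by
    rw [show Real.sin x = Real.sin (2*(x/2)) by congr 1; ring, Real.sin_two_mul]
  have h2 := aux_cos x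
  have key := aux_tan (x/2) (by linarith) (by linarith)
  calc x * Real.sin x = 4 * Real.sin (x/2) * ((x/2) * Real.cos (x/2)) := by rw [h1]; ring
    _ ≤ 4 * Real.sin (x/2) * Real.sin (x/2) :=
        mul_le_mul_of_nonneg_left key (by positivity)
    _ = 2 * (1 - Real.cos x) := by rw [h2]; ring

private lemma aux_K (θ : ℝ) (hθ : 0 < θ) (hθ2 : θ < 2*π) :
    |Real.sin θ / (1 - Real.cos θ)| ≤ 2/θ + 2/(2*π - θ) := by
  have hπ := Real.pi_pos
  have hcos : 0 < 1 - Real.cos θ := by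
    have hs : 0 < Real.sin (θ/2) := Real.sin_pos_of_pos_of_lt_pi (by linarith) (by linarith)
    have h2 := aux_cos θ
    nlinarith
  rcases le_or_gt θ π with h | h
  · have hsin : 0 ≤ Real.sin θ := Real.sin_nonneg_of_nonneg_of_le_pi hθ.le h
    rw [abs_of_nonneg (by positivity)]
    have h1 : Real.sin θ / (1 - Real.cos θ) ≤ 2/θ := by
      rw [div_le_div_iff₀ hcos hθ]
      have := aux_P θ hθ.le h
      linarith [mul_comm (Real.sin θ) θ]
    have h2 : 0 ≤ 2/(2*π - θ) := div_nonneg (by norm_num) (by linarith)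
    linarith
  · set η := 2*π - θ with hηdef
    have hη0 : 0 < η := by rw [hηdef]; linarith
    have hηπ : η < π := by rw [hηdef]; linarith
    have hθη : θ = 2*π - η := by rw [hηdef]; ring
    have hsθ : Real.sin θ = -Real.sin η := by rw [hθη]; exact Real.sin_two_pi_sub η
    have hcθ : Real.cos θ = Real.cos η := by rw [hθη]; exact Real.cos_two_pi_sub η
    have hcosη : 0 < 1 - Real.cos η := by rw [← hcθ]; exact hcos
    have hsinη : 0 ≤ Real.sin η := Real.sin_nonneg_of_nonneg_of_le_pi hη0.le hηπ.le
    have habs : |Real.sin θ / (1 - Real.cos θ)| = Real.sin η / (1 - Real.cos η) := by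
      rw [hsθ, hcθ, neg_div, abs_neg, abs_of_nonneg (by positivity)]
    rw [habs]
    have h1 : Real.sin η / (1 - Real.cos η) ≤ 2/η := by
      rw [div_le_div_iff₀ hcosη hη0]
      have := aux_P η hη0.le hηπ.le
      linarith [mul_comm (Real.sin η) η]
    have h2 : 0 ≤ 2/θ := by positivity
    linarith


theorem shifted_bridge_integral_continuous
    (W : ℝ → ℝ) (hW : ContinuousOn W (Set.Icc 0 (2*π)))
    (h0 : W 0 = 0) (h2π : W (2*π) = 0)
    (Wper : ℝ → ℝ) (hper : Function.Periodic Wper (2*π))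
    (hagree : ∀ t ∈ Set.Icc (0:ℝ) (2*π), Wper t = W t)
    (C δ₀ : ℝ) (hδ₀ : 0 < δ₀)
    (hmod : ∀ t δ : ℝ, 0 < δ → δ ≤ δ₀ →
      |Wper (t + δ) - Wper t| ≤ C * Real.sqrt (δ * Real.log (1/δ)) + C * δ)
    (I : ℝ → ℝ)
    (hI : ∀ φ, I φ = ∫ θ in (0:ℝ)..(2*π),
      (if θ ≤ 2*π - φ then W (φ + θ) - W φ else W (φ + θ - 2*π) - W φ) *
        (Real.sin θ / (1 - Real.cos θ)))
    (hint : ∀ φ ∈ Set.Ico (0:ℝ) (2*π), IntervalIntegrable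
      (fun θ : ℝ =>
        (if θ ≤ 2*π - φ then W (φ + θ) - W φ else W (φ + θ - 2*π) - W φ) *
          (Real.sin θ / (1 - Real.cos θ)))
      MeasureTheory.volume 0 (2*π)) :
    ContinuousOn I (Set.Ico 0 (2*π)) := by
  have hπ : 0 < π := Real.pi_pos
  have hπ3 : 3 < π := by linarith [Real.pi_gt_three]
  have h2πpos : (0:ℝ) < 2*π := by linarith
  haveI : Fact ((0:ℝ) < 2*π) := ⟨h2πpos⟩
  -- the integrand as a two-variable function
  set F : ℝ → ℝ → ℝ := fun φ θ =>
    (if θ ≤ 2*π - φ then W (φ + θ) - W φ else W (φ + θ - 2*π) - W φ) *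
      (Real.sin θ / (1 - Real.cos θ)) with hF
  -- periodic reduction
  have red : ∀ t : ℝ, ∃ s, s ∈ Set.Ico (0:ℝ) (2*π) ∧ Wper t = Wper s ∧
      ((t : AddCircle (2*π)) = (s : AddCircle (2*π))) := by
    intro t
    refine ⟨t - ⌊t/(2*π)⌋ * (2*π), ⟨Int.sub_floor_div_mul_nonneg t h2πpos,
      Int.sub_floor_div_mul_lt t h2πpos⟩, (hper.sub_int_mul_eq _).symm, ?_⟩
    rw [QuotientAddGroup.eq]
    refine AddSubgroup.mem_zmultiples_iff.mpr ⟨-⌊t/(2*π)⌋, ?_⟩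
    push_cast [zsmul_eq_mul]
    ring
  -- continuity of Wper
  have hWc : Continuous Wper := by
    have hf : W 0 = W (0 + 2*π) := by rw [h0, zero_add, h2π]
    have hc : ContinuousOn W (Set.Icc 0 (0 + 2*π)) := by rwa [zero_add]
    have hlc : Continuous (AddCircle.liftIco (2*π) 0 W) := AddCircle.liftIco_continuous hf hc
    have heq : Wper = fun t : ℝ => AddCircle.liftIco (2*π) 0 W (t : AddCircle (2*π)) := by
      funext t
      obtain ⟨s, hs, hts, hcoe⟩ := red t
      rw [hts, hcoe, AddCircle.liftIco_zero_coe_apply hs,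
        hagree s ⟨hs.1, hs.2.le⟩]
    rw [heq]
    exact hlc.comp (AddCircle.continuous_mk' (2*π))
  -- global bound on Wper
  obtain ⟨M, hM⟩ := isCompact_Icc.exists_bound_of_continuousOn
    (s := Set.Icc (0:ℝ) (2*π)) hWc.continuousOn
  have hMall : ∀ t, |Wper t| ≤ M := by
    intro t
    obtain ⟨s, hs, hts, -⟩ := red t
    rw [hts]
    exact hM s ⟨hs.1, hs.2.le⟩
  have hM0 : 0 ≤ M := le_trans (abs_nonneg _) (hMall 0)
  -- constants
  obtain ⟨A, hA⟩ : ∃ A : ℝ, A = 3 * |C| + 1 := ⟨_, rfl⟩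
  have hA0 : (0:ℝ) ≤ A := by rw [hA]; positivity
  obtain ⟨δ₁, hδ₁def⟩ : ∃ d : ℝ, d = min δ₀ 1 := ⟨_, rfl⟩
  have hδ₁pos : 0 < δ₁ := by rw [hδ₁def]; exact lt_min hδ₀ one_pos
  have hδ₁le1 : δ₁ ≤ 1 := by rw [hδ₁def]; exact min_le_right _ _
  have hδ₁δ₀ : δ₁ ≤ δ₀ := by rw [hδ₁def]; exact min_le_left _ _
  -- modulus estimate: |Wper(t+δ) - Wper t| ≤ A √√δ
  have key1 : ∀ t δ : ℝ, 0 < δ → δ ≤ δ₁ →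
      |Wper (t + δ) - Wper t| ≤ A * Real.sqrt (Real.sqrt δ) := by
    intro t δ hδ hδle
    have hδ1 : δ ≤ 1 := le_trans hδle hδ₁le1
    have h := hmod t δ hδ (le_trans hδle hδ₁δ₀)
    have hs : 0 < Real.sqrt δ := Real.sqrt_pos.mpr hδ
    have hlog : Real.log (1/δ) ≤ 2 / Real.sqrt δ := by
      have h1 : Real.log (1/Real.sqrt δ) ≤ 1/Real.sqrt δ - 1 :=
        Real.log_le_sub_one_of_pos (by positivity)
      have h2 : Real.log (1/δ) = 2 * Real.log (1/Real.sqrt δ) := by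
        rw [Real.log_div one_ne_zero (ne_of_gt hδ),
          Real.log_div one_ne_zero (ne_of_gt hs), Real.log_sqrt hδ.le, Real.log_one]
        ring
      have h3 : 2 / Real.sqrt δ = 2 * (1/Real.sqrt δ) := by ring
      rw [h2, h3]
      linarith
    have hlog0 : 0 ≤ Real.log (1/δ) := Real.log_nonneg (by rw [le_div_iff₀ hδ]; linarith)
    have hδlog : δ * Real.log (1/δ) ≤ 2 * Real.sqrt δ := by
      calc δ * Real.log (1/δ) ≤ δ * (2/Real.sqrt δ) :=
            mul_le_mul_of_nonneg_left hlog hδ.le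
        _ = 2 * (δ / Real.sqrt δ) := by ring
        _ = 2 * Real.sqrt δ := by rw [Real.div_sqrt]
    have hsqrt2 : Real.sqrt 2 ≤ 2 := by
      nlinarith [Real.sq_sqrt (show (0:ℝ) ≤ 2 by norm_num), Real.sqrt_nonneg 2]
    have hsq : Real.sqrt (δ * Real.log (1/δ)) ≤ 2 * Real.sqrt (Real.sqrt δ) := by
      calc Real.sqrt (δ * Real.log (1/δ)) ≤ Real.sqrt (2 * Real.sqrt δ) :=
            Real.sqrt_le_sqrt hδlog
        _ = Real.sqrt 2 * Real.sqrt (Real.sqrt δ) := Real.sqrt_mul (by norm_num) _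
        _ ≤ 2 * Real.sqrt (Real.sqrt δ) :=
            mul_le_mul_of_nonneg_right hsqrt2 (Real.sqrt_nonneg _)
    have hδ4 : δ ≤ Real.sqrt (Real.sqrt δ) := by
      have h1 : δ ≤ Real.sqrt δ := by
        nlinarith [Real.sq_sqrt hδ.le, Real.sqrt_le_one.mpr hδ1, Real.sqrt_nonneg δ]
      have h2 : Real.sqrt δ ≤ Real.sqrt (Real.sqrt δ) := by
        nlinarith [Real.sq_sqrt hs.le, Real.sqrt_le_one.mpr (Real.sqrt_le_one.mpr hδ1),
          Real.sqrt_nonneg (Real.sqrt δ)]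
      linarith
    have hCs : C * Real.sqrt (δ * Real.log (1/δ)) ≤ |C| * (2 * Real.sqrt (Real.sqrt δ)) := by
      calc C * Real.sqrt (δ * Real.log (1/δ)) ≤ |C| * Real.sqrt (δ * Real.log (1/δ)) :=
            mul_le_mul_of_nonneg_right (le_abs_self C) (Real.sqrt_nonneg _)
        _ ≤ |C| * (2 * Real.sqrt (Real.sqrt δ)) :=
            mul_le_mul_of_nonneg_left hsq (abs_nonneg C)
    have hCd : C * δ ≤ |C| * Real.sqrt (Real.sqrt δ) := by
      calc C * δ ≤ |C| * δ := mul_le_mul_of_nonneg_right (le_abs_self C) hδ.le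
        _ ≤ |C| * Real.sqrt (Real.sqrt δ) := mul_le_mul_of_nonneg_left hδ4 (abs_nonneg C)
    have hfin : 0 ≤ Real.sqrt (Real.sqrt δ) := Real.sqrt_nonneg _
    rw [hA]
    have hexp : (3*|C|+1) * Real.sqrt (Real.sqrt δ)
        = |C| * (2 * Real.sqrt (Real.sqrt δ)) + |C| * Real.sqrt (Real.sqrt δ)
          + Real.sqrt (Real.sqrt δ) := by ring
    linarith
  -- the dominating function
  set bnd : ℝ → ℝ := fun θ =>
    (2*A) * (Real.sqrt (Real.sqrt θ) / θ) +
    (2*A) * (Real.sqrt (Real.sqrt (2*π - θ)) / (2*π - θ)) + (2*A + 8*M/δ₁) with hbnd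
  -- integrability of the dominating function
  have hb1 : IntegrableOn (fun θ : ℝ => Real.sqrt (Real.sqrt θ) / θ)
      (Set.Ioo 0 (2*π)) volume := by
    have h1 : IntervalIntegrable (fun x : ℝ => x ^ (-(3/4) : ℝ)) volume 0 (2*π) :=
      intervalIntegral.intervalIntegrable_rpow' (by norm_num)
    have h2 : IntegrableOn (fun x : ℝ => x ^ (-(3/4):ℝ)) (Set.Ioc 0 (2*π)) volume := h1.1
    refine (h2.mono_set Set.Ioo_subset_Ioc_self).congr_fun ?_ measurableSet_Ioo
    intro θ hθ
    have hθ0 : (0:ℝ) < θ := hθ.1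
    have e1 : Real.sqrt (Real.sqrt θ) = θ ^ ((1:ℝ)/4) := by
      rw [Real.sqrt_eq_rpow, Real.sqrt_eq_rpow, ← Real.rpow_mul hθ0.le]
      norm_num
    show θ ^ (-(3/4):ℝ) = Real.sqrt (Real.sqrt θ) / θ
    rw [e1, show (-(3/4):ℝ) = (1:ℝ)/4 - 1 by norm_num, Real.rpow_sub hθ0, Real.rpow_one]
  have hb2 : IntegrableOn (fun θ : ℝ => Real.sqrt (Real.sqrt (2*π - θ)) / (2*π - θ))
      (Set.Ioo 0 (2*π)) volume := by
    have h1 : IntervalIntegrable (fun x : ℝ => x ^ (-(3/4) : ℝ)) volume 0 (2*π) :=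
      intervalIntegral.intervalIntegrable_rpow' (by norm_num)
    have h2 : IntervalIntegrable (fun x : ℝ => (2*π - x) ^ (-(3/4):ℝ)) volume
        (2*π - 0) (2*π - 2*π) := h1.comp_sub_left (2*π)
    have h3 : IntegrableOn (fun x : ℝ => (2*π - x) ^ (-(3/4):ℝ)) (Set.Ioc 0 (2*π)) volume := by
      have := h2.symm
      rw [show (2*π - 2*π : ℝ) = 0 by ring, show (2*π - 0 : ℝ) = 2*π by ring] at this
      exact this.1
    refine (h3.mono_set Set.Ioo_subset_Ioc_self).congr_fun ?_ measurableSet_Ioo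
    intro θ hθ
    have hθ0 : (0:ℝ) < 2*π - θ := by linarith [hθ.2]
    have e1 : Real.sqrt (Real.sqrt (2*π - θ)) = (2*π - θ) ^ ((1:ℝ)/4) := by
      rw [Real.sqrt_eq_rpow, Real.sqrt_eq_rpow, ← Real.rpow_mul hθ0.le]
      norm_num
    show (2*π - θ) ^ (-(3/4):ℝ) = Real.sqrt (Real.sqrt (2*π - θ)) / (2*π - θ)
    rw [e1, show (-(3/4):ℝ) = (1:ℝ)/4 - 1 by norm_num, Real.rpow_sub hθ0, Real.rpow_one]
  have hbint : Integrable bnd (volume.restrict (Set.Ioo 0 (2*π))) := by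
    refine Integrable.add (Integrable.add ?_ ?_) ?_
    · exact hb1.const_mul (2*A)
    · exact hb2.const_mul (2*A)
    · exact integrableOn_const measure_Ioo_lt_top.ne
  -- rewriting the integrand
  have hFeq : ∀ φ ∈ Set.Ico (0:ℝ) (2*π), ∀ θ ∈ Set.Icc (0:ℝ) (2*π),
      F φ θ = (Wper (φ + θ) - Wper φ) * (Real.sin θ / (1 - Real.cos θ)) := by
    intro φ hφ θ hθ
    have hφW : Wper φ = W φ := hagree φ ⟨hφ.1, hφ.2.le⟩
    simp only [hF]
    by_cases hc : θ ≤ 2*π - φ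
    · rw [if_pos hc, hφW, hagree (φ+θ) ⟨by linarith [hφ.1, hθ.1], by linarith⟩]
    · push_neg at hc
      rw [if_neg (not_le.mpr hc), hφW]
      have e1 : Wper (φ + θ) = W (φ + θ - 2*π) := by
        have h1 := hper (φ + θ - 2*π)
        rw [sub_add_cancel] at h1
        rw [h1]
        exact hagree _ ⟨by linarith, by linarith [hφ.2, hθ.2]⟩
      rw [e1]
  -- main continuity argument
  have hIeq : Set.EqOn I (fun φ => ∫ θ, F φ θ ∂(volume.restrict (Set.Ioo 0 (2*π))))
      (Set.Ico 0 (2*π)) := by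
    intro φ hφ
    rw [hI φ, intervalIntegral.integral_of_le h2πpos.le,
      MeasureTheory.integral_Ioc_eq_integral_Ioo]
  refine ContinuousOn.congr ?_ hIeq
  apply MeasureTheory.continuousOn_of_dominated (bound := bnd)
  · intro φ hφ
    exact ((hint φ hφ).1.aestronglyMeasurable).mono_measure
      (Measure.restrict_mono Set.Ioo_subset_Ioc_self le_rfl)
  · intro φ hφ
    filter_upwards [ae_restrict_mem measurableSet_Ioo] with θ hθ
    rw [hFeq φ hφ θ ⟨hθ.1.le, hθ.2.le⟩, Real.norm_eq_abs, abs_mul]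
    have hθ0 : (0:ℝ) < θ := hθ.1
    have hθ2 : θ < 2*π := hθ.2
    have hK := aux_K θ hθ0 hθ2
    have ht2 : 0 ≤ Real.sqrt (Real.sqrt (2*π - θ)) / (2*π - θ) :=
      div_nonneg (Real.sqrt_nonneg _) (by linarith)
    have ht1 : 0 ≤ Real.sqrt (Real.sqrt θ) / θ :=
      div_nonneg (Real.sqrt_nonneg _) hθ0.le
    have hMconst : 0 ≤ 8*M/δ₁ := div_nonneg (by linarith) hδ₁pos.le
    rw [hbnd]
    rcases le_or_gt θ δ₁ with h1 | h1
    · -- near 0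
      have hD : |Wper (φ + θ) - Wper φ| ≤ A * Real.sqrt (Real.sqrt θ) := key1 φ θ hθ0 h1
      have hfar : (1:ℝ) ≤ 2*π - θ := by
        have : θ ≤ 1 := le_trans h1 hδ₁le1
        linarith
      have hKb : |Real.sin θ / (1 - Real.cos θ)| ≤ 2/θ + 2 := by
        have h2 : 2/(2*π - θ) ≤ 2 := by
          rw [div_le_iff₀ (by linarith)]
          linarith
        linarith
      have hθ4 : Real.sqrt (Real.sqrt θ) ≤ 1 :=
        Real.sqrt_le_one.mpr (Real.sqrt_le_one.mpr (le_trans h1 hδ₁le1))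
      calc |Wper (φ + θ) - Wper φ| * |Real.sin θ / (1 - Real.cos θ)|
          ≤ (A * Real.sqrt (Real.sqrt θ)) * (2/θ + 2) :=
            mul_le_mul hD hKb (abs_nonneg _) (mul_nonneg hA0 (Real.sqrt_nonneg _))
        _ = 2*A * (Real.sqrt (Real.sqrt θ) / θ) + 2*A * Real.sqrt (Real.sqrt θ) := by
            field_simp
        _ ≤ 2*A * (Real.sqrt (Real.sqrt θ) / θ) +
            2*A * (Real.sqrt (Real.sqrt (2*π - θ)) / (2*π - θ)) + (2*A + 8*M/δ₁) := by
            have e1 : 2*A * Real.sqrt (Real.sqrt θ) ≤ 2*A * 1 :=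
              mul_le_mul_of_nonneg_left hθ4 (by linarith)
            have e2 : 0 ≤ 2*A * (Real.sqrt (Real.sqrt (2*π - θ)) / (2*π - θ)) :=
              mul_nonneg (by linarith) ht2
            linarith
    · rcases le_or_gt (2*π - δ₁) θ with h2 | h2
      · -- near 2π
        have hη0 : 0 < 2*π - θ := by linarith
        have hη1 : 2*π - θ ≤ δ₁ := by linarith
        have hD : |Wper (φ + θ) - Wper φ| ≤ A * Real.sqrt (Real.sqrt (2*π - θ)) := by
          have hk := key1 (φ + θ) (2*π - θ) hη0 hη1
          rw [show φ + θ + (2*π - θ) = φ + 2*π by ring, hper φ, abs_sub_comm] at hk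
          exact hk
        have hfar : (1:ℝ) ≤ θ := by
          have : 2*π - θ ≤ 1 := le_trans hη1 hδ₁le1
          linarith
        have hKb : |Real.sin θ / (1 - Real.cos θ)| ≤ 2/(2*π - θ) + 2 := by
          have h3 : 2/θ ≤ 2 := by
            rw [div_le_iff₀ hθ0]
            linarith
          linarith
        have hθ4 : Real.sqrt (Real.sqrt (2*π - θ)) ≤ 1 :=
          Real.sqrt_le_one.mpr (Real.sqrt_le_one.mpr (le_trans hη1 hδ₁le1))
        calc |Wper (φ + θ) - Wper φ| * |Real.sin θ / (1 - Real.cos θ)|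
            ≤ (A * Real.sqrt (Real.sqrt (2*π - θ))) * (2/(2*π - θ) + 2) :=
              mul_le_mul hD hKb (abs_nonneg _) (mul_nonneg hA0 (Real.sqrt_nonneg _))
          _ = 2*A * (Real.sqrt (Real.sqrt (2*π - θ)) / (2*π - θ)) +
              2*A * Real.sqrt (Real.sqrt (2*π - θ)) := by
              field_simp
          _ ≤ 2*A * (Real.sqrt (Real.sqrt θ) / θ) +
              2*A * (Real.sqrt (Real.sqrt (2*π - θ)) / (2*π - θ)) + (2*A + 8*M/δ₁) := by
              have e1 : 2*A * Real.sqrt (Real.sqrt (2*π - θ)) ≤ 2*A * 1 :=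
                mul_le_mul_of_nonneg_left hθ4 (by linarith)
              have e2 : 0 ≤ 2*A * (Real.sqrt (Real.sqrt θ) / θ) :=
                mul_nonneg (by linarith) ht1
              linarith
      · -- middle region
        have hD : |Wper (φ + θ) - Wper φ| ≤ 2*M := by
          calc |Wper (φ + θ) - Wper φ| ≤ |Wper (φ + θ)| + |Wper φ| := abs_sub _ _
            _ ≤ 2*M := by linarith [hMall (φ + θ), hMall φ]
        have hKθ : 2/θ ≤ 2/δ₁ := by
          rw [div_le_div_iff₀ hθ0 hδ₁pos]
          linarith
        have hKη : 2/(2*π - θ) ≤ 2/δ₁ := by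
          rw [div_le_div_iff₀ (by linarith) hδ₁pos]
          linarith
        have hKb4 : |Real.sin θ / (1 - Real.cos θ)| ≤ 4/δ₁ := by
          have e : 2/δ₁ + 2/δ₁ = 4/δ₁ := by ring
          linarith
        calc |Wper (φ + θ) - Wper φ| * |Real.sin θ / (1 - Real.cos θ)|
            ≤ (2*M) * (4/δ₁) := mul_le_mul hD hKb4 (abs_nonneg _) (by linarith)
          _ = 8*M/δ₁ := by ring
          _ ≤ 2*A * (Real.sqrt (Real.sqrt θ) / θ) +
              2*A * (Real.sqrt (Real.sqrt (2*π - θ)) / (2*π - θ)) + (2*A + 8*M/δ₁) := by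
              have e1 : 0 ≤ 2*A * (Real.sqrt (Real.sqrt θ) / θ) :=
                mul_nonneg (by linarith) ht1
              have e2 : 0 ≤ 2*A * (Real.sqrt (Real.sqrt (2*π - θ)) / (2*π - θ)) :=
                mul_nonneg (by linarith) ht2
              linarith
  · exact hbint
  · filter_upwards [ae_restrict_mem measurableSet_Ioo] with θ hθ
    have hKc : Continuous fun φ : ℝ =>
        (Wper (φ + θ) - Wper φ) * (Real.sin θ / (1 - Real.cos θ)) :=
      ((hWc.comp (continuous_add_right θ)).sub hWc).mul continuous_const
    exact hKc.continuousOn.congr (fun φ hφ => hFeq φ hφ θ ⟨hθ.1.le, hθ.2.le⟩)
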